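/- Let t ∈ ℕ and let k < 2^t. For all n < 2^t: C(2^t − 1 − n, k) ≡ C(n + k, k) (mod 2). (The reverse of the binomial sequence C(·, k) mod 2 over one period of length 2^t equals the cyclic shift of that sequence by k positions to the left.) -/
import Mathlib

private theorem aux_rev (t : ℕ) : ∀ k n : ℕ, k < 2 ^ t → n < 2 ^ t →
    ((2 ^ t - 1 - n).choose k : ZMod 2) = ((n + k).choose k : ZMod 2) := by
  haveI : Fact (Nat.Prime 2) := ⟨Nat.prime_two⟩
  induction t with
  | zero =>
    intro k n hk hn
    interval_cases k <;> interval_cases n <;> rfl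
  | succ t ih =>
    intro k n hk hn
    have h2t : 2 ^ (t + 1) = 2 * 2 ^ t := by ring
    have step : ∀ m : ℕ, ((m).choose k : ZMod 2) =
        ((m % 2).choose (k % 2) : ZMod 2) * ((m / 2).choose (k / 2) : ZMod 2) := by
      intro m
      have h := Choose.choose_modEq_choose_mod_mul_choose_div_nat (p := 2) (n := m) (k := k)
      have h' := (ZMod.natCast_eq_natCast_iff _ _ _).mpr h
      push_cast at h'
      exact h'
    have ha_mod : (2 ^ (t+1) - 1 - n) % 2 = 1 - n % 2 := by omega
    have ha_div : (2 ^ (t+1) - 1 - n) / 2 = 2 ^ t - 1 - n / 2 := by omega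
    have hkd : k / 2 < 2 ^ t := by omega
    have hnd : n / 2 < 2 ^ t := by omega
    rw [step (2 ^ (t+1) - 1 - n), step (n + k), ha_mod, ha_div]
    rcases Nat.mod_two_eq_zero_or_one n with hn2 | hn2 <;>
      rcases Nat.mod_two_eq_zero_or_one k with hk2 | hk2
    · have h1 : (n + k) % 2 = 0 := by omega
      have h2 : (n + k) / 2 = n / 2 + k / 2 := by omega
      rw [hn2, hk2, h1, h2, ih _ _ hkd hnd] <;> norm_num
    · have h1 : (n + k) % 2 = 1 := by omega
      have h2 : (n + k) / 2 = n / 2 + k / 2 := by omega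
      rw [hn2, hk2, h1, h2, ih _ _ hkd hnd] <;> norm_num
    · have h1 : (n + k) % 2 = 1 := by omega
      have h2 : (n + k) / 2 = n / 2 + k / 2 := by omega
      rw [hn2, hk2, h1, h2, ih _ _ hkd hnd] <;> norm_num
    · have h1 : (n + k) % 2 = 0 := by omega
      rw [hn2, hk2, h1]
      norm_num [Nat.choose]
    
/-- The reverse of the binomial sequence `C(·, k) mod 2` over one period of length `2^t`
equals the cyclic shift of the sequence by `k` positions to the left. -/
theorem reverse_binomial_eq_shift (t k : ℕ) (hk : k < 2 ^ t) :
    ∀ n : ℕ, n < 2 ^ t →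
      ((2 ^ t - 1 - n).choose k : ZMod 2) = ((n + k).choose k : ZMod 2) := by
  exact fun n hn => aux_rev t k n hk hn
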